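/- arXiv:1110.6487 — 2 statements merged into one kernel-verified Lean document; each statement's English description precedes it below -/
import Mathlib

section
/- For any 3×3 sign matrix Λ over the rationals (Λ_{ii} = 0, Λ_{ij} ∈ {-1,1} for i ≠ j), there exist diagonal rational matrices A, B, U, V with all diagonal entries of U nonzero such that Λ·A + Λ·B·Λ = U + V·Λ. -/
theorem alignment_solvable_strong (Λ : Matrix (Fin 3) (Fin 3) ℚ)
    (hdiag : ∀ i, Λ i i = 0)
    (hoff : ∀ i j, i ≠ j → Λ i j = 1 ∨ Λ i j = -1) :
    ∃ a b u v : Fin 3 → ℚ, (∀ k, u k ≠ 0) ∧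
      Λ * Matrix.diagonal a + Λ * Matrix.diagonal b * Λ =
        Matrix.diagonal u + Matrix.diagonal v * Λ := by
  have sq : ∀ i j, i ≠ j → Λ i j * Λ i j = 1 := by
    intro i j h; rcases hoff i j h with e | e <;> rw [e] <;> norm_num
  have hx := sq 0 1 (by decide)
  have hx2 := sq 1 0 (by decide)
  have hy := sq 0 2 (by decide)
  have hy2 := sq 2 0 (by decide)
  have hz := sq 1 2 (by decide)
  have hz2 := sq 2 1 (by decide)
  have d0 := hdiag 0; have d1 := hdiag 1; have d2 := hdiag 2
  -- sign products
  have px : Λ 0 1 * Λ 1 0 = 1 ∨ Λ 0 1 * Λ 1 0 = -1 := by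
    rcases hoff 0 1 (by decide) with e | e <;> rcases hoff 1 0 (by decide) with f | f <;>
      rw [e, f] <;> norm_num
  have py : Λ 0 2 * Λ 2 0 = 1 ∨ Λ 0 2 * Λ 2 0 = -1 := by
    rcases hoff 0 2 (by decide) with e | e <;> rcases hoff 2 0 (by decide) with f | f <;>
      rw [e, f] <;> norm_num
  have pz : Λ 1 2 * Λ 2 1 = 1 ∨ Λ 1 2 * Λ 2 1 = -1 := by
    rcases hoff 1 2 (by decide) with e | e <;> rcases hoff 2 1 (by decide) with f | f <;>
      rw [e, f] <;> norm_num
  refine ⟨![Λ 1 2 * Λ 1 0 * Λ 0 2 * (Λ 0 1 * Λ 1 0) - Λ 1 0 * Λ 1 2 * Λ 2 0 * (Λ 1 2 * Λ 2 1),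
            Λ 0 2 * Λ 0 1 * Λ 1 2 * 2 - Λ 0 1 * Λ 0 2 * Λ 2 1 * (Λ 1 2 * Λ 2 1), 0],
          ![Λ 0 1 * Λ 1 0, 2, Λ 1 2 * Λ 2 1],
          ![2 * (Λ 0 1 * Λ 1 0) + Λ 0 2 * Λ 2 0 * (Λ 1 2 * Λ 2 1), 2,
            Λ 0 1 * Λ 1 0 * (Λ 0 2 * Λ 2 0) + 2 * (Λ 1 2 * Λ 2 1)],
          ![Λ 0 2 * Λ 0 1 * Λ 1 2 * 2, Λ 1 2 * Λ 1 0 * Λ 0 2 * (Λ 0 1 * Λ 1 0),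
            Λ 1 2 * Λ 1 0 * Λ 0 2 * (Λ 0 1 * Λ 1 0) - Λ 1 0 * Λ 1 2 * Λ 2 0 * (Λ 1 2 * Λ 2 1)
              + 2 * (Λ 2 0 * Λ 2 1 * Λ 1 0)], ?_, ?_⟩
  · intro k
    fin_cases k
    · show 2 * (Λ 0 1 * Λ 1 0) + Λ 0 2 * Λ 2 0 * (Λ 1 2 * Λ 2 1) ≠ 0
      rcases px with px | px <;> rcases py with py | py <;> rcases pz with pz | pz <;>
        rw [px, py, pz] <;> norm_num
    · show (2 : ℚ) ≠ 0; norm_num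
    · show Λ 0 1 * Λ 1 0 * (Λ 0 2 * Λ 2 0) + 2 * (Λ 1 2 * Λ 2 1) ≠ 0
      rcases px with px | px <;> rcases py with py | py <;> rcases pz with pz | pz <;>
        rw [px, py, pz] <;> norm_num
  · ext i j
    fin_cases i <;> fin_cases j <;>
      simp [Matrix.mul_apply, Fin.sum_univ_three, d0, d1, d2]
    · ring
    · linear_combination (-1 : ℚ) * Λ 0 2 * Λ 1 2 * Λ 2 1 * Λ 2 1 * hx
    · linear_combination (-2 : ℚ) * Λ 0 1 * Λ 1 2 * hy
    · linear_combination (-1 : ℚ) * Λ 2 0 * Λ 1 2 * Λ 1 2 * Λ 2 1 * hx2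
    · linear_combination Λ 1 0 * Λ 1 0 * hx + hx2 + Λ 2 1 * Λ 2 1 * hz + hz2
    · linear_combination (Λ 0 1 * Λ 0 2 - Λ 0 1 * Λ 0 2 * Λ 1 2 * Λ 1 2) * hx2
        + (-1 : ℚ) * Λ 0 1 * Λ 0 2 * hz
    · linear_combination (-2 : ℚ) * Λ 1 0 * Λ 2 1 * hy2
    · linear_combination Λ 1 0 * Λ 2 0 * hx + (-1 : ℚ) * Λ 0 1 * Λ 0 2 * Λ 1 2 * Λ 2 1 * hx2
        + Λ 1 0 * Λ 2 0 * Λ 2 1 * Λ 2 1 * hz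
        + ((-1 : ℚ) * Λ 1 0 * Λ 2 0 + (-1 : ℚ) * Λ 0 1 * Λ 0 2 * Λ 1 2 * Λ 2 1) * hz2
    · ring
end

section
/- For real SNR > 0 and α > 0 with α ≠ 1, the limit as SNR → ∞ of [ (1/4)·log(1 + SNR + SNR^α) + (1/4)·log(1 + SNR^{max(1-α,0)}) ] / ((1/2)·log SNR) equals max(1, α)/2 + max(1-α, 0)/2; in particular it equals 1 − α/2 when 0 < α < 1 and α/2 when α > 1. -/
open Filter Real

lemma gdof_aux (m K : ℝ) (hK : 1 ≤ K) (h : ℝ → ℝ)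
    (hb : ∀ᶠ S in atTop, S ^ m ≤ h S ∧ h S ≤ K * S ^ m) :
    Tendsto (fun S => Real.log (h S) / Real.log S) atTop (nhds m) := by
  have hupper : Tendsto (fun S : ℝ => Real.log K / Real.log S + m) atTop (nhds m) := by
    have h0 : Tendsto (fun S : ℝ => Real.log K / Real.log S) atTop (nhds 0) := by
      simpa [div_eq_mul_inv] using
        (Real.tendsto_log_atTop.inv_tendsto_atTop).const_mul (Real.log K)
    simpa using h0.add tendsto_const_nhds
  apply tendsto_of_tendsto_of_tendsto_of_le_of_le' tendsto_const_nhds hupper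
  · filter_upwards [hb, eventually_gt_atTop 1] with S hS hS1
    have hSpos : 0 < S := lt_trans one_pos hS1
    have hlog : 0 < Real.log S := Real.log_pos hS1
    have hrp : (0:ℝ) < S ^ m := Real.rpow_pos_of_pos hSpos m
    have h1 : m * Real.log S ≤ Real.log (h S) := by
      rw [← Real.log_rpow hSpos]
      exact Real.log_le_log hrp hS.1
    calc m = m * Real.log S / Real.log S := by field_simp
    _ ≤ Real.log (h S) / Real.log S := by gcongr
  · filter_upwards [hb, eventually_gt_atTop 1] with S hS hS1
    have hSpos : 0 < S := lt_trans one_pos hS1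
    have hlog : 0 < Real.log S := Real.log_pos hS1
    have hrp : (0:ℝ) < S ^ m := Real.rpow_pos_of_pos hSpos m
    have hpos : 0 < h S := lt_of_lt_of_le hrp hS.1
    have h1 : Real.log (h S) ≤ Real.log K + m * Real.log S := by
      calc Real.log (h S) ≤ Real.log (K * S ^ m) := Real.log_le_log hpos hS.2
      _ = Real.log K + m * Real.log S := by
          rw [Real.log_mul (by linarith) hrp.ne', Real.log_rpow hSpos]
    calc Real.log (h S) / Real.log S ≤ (Real.log K + m * Real.log S) / Real.log S := by gcongr
    _ = Real.log K / Real.log S + m := by field_simp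

theorem gdof_limit (α : ℝ) (hα : 0 < α) (hα1 : α ≠ 1) :
    Tendsto (fun SNR : ℝ =>
        ((1 / 4) * Real.log (1 + SNR + SNR ^ α)
          + (1 / 4) * Real.log (1 + SNR ^ max (1 - α) 0)) / ((1 / 2) * Real.log SNR))
      atTop (nhds (max 1 α / 2 + max (1 - α) 0 / 2)) ∧
    (α < 1 → max 1 α / 2 + max (1 - α) 0 / 2 = 1 - α / 2) ∧
    (1 < α → max 1 α / 2 + max (1 - α) 0 / 2 = α / 2) := by
  set m := max 1 α with hm
  set β := max (1 - α) 0 with hβ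
  have hβ0 : 0 ≤ β := le_max_right _ _
  have hm1 : 1 ≤ m := le_max_left _ _
  constructor
  · have t1 : Tendsto (fun S => Real.log (1 + S + S ^ α) / Real.log S) atTop (nhds m) := by
      apply gdof_aux m 3 (by norm_num)
      filter_upwards [eventually_ge_atTop 1] with S hS1
      have hSpos : (0:ℝ) < S := lt_of_lt_of_le one_pos hS1
      have h1m : (1:ℝ) ≤ S ^ m := Real.one_le_rpow hS1 (by linarith)
      have hSm : S ≤ S ^ m := by
        calc S = S ^ (1:ℝ) := (Real.rpow_one S).symm
        _ ≤ S ^ m := Real.rpow_le_rpow_of_exponent_le hS1 hm1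
      have hαm : S ^ α ≤ S ^ m := Real.rpow_le_rpow_of_exponent_le hS1 (le_max_right _ _)
      constructor
      · rcases max_choice 1 α with h | h
        · rw [hm, h]
          have : (0:ℝ) < S ^ α := Real.rpow_pos_of_pos hSpos α
          simp only [Real.rpow_one]; linarith
        · rw [hm, h]; linarith
      · linarith
    have t2 : Tendsto (fun S => Real.log (1 + S ^ β) / Real.log S) atTop (nhds β) := by
      apply gdof_aux β 2 (by norm_num)
      filter_upwards [eventually_ge_atTop 1] with S hS1
      have h1β : (1:ℝ) ≤ S ^ β := Real.one_le_rpow hS1 hβ0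
      constructor <;> linarith
    have := (t1.const_mul (1/2 : ℝ)).add (t2.const_mul (1/2 : ℝ))
    have heq : m / 2 + β / 2 = 1/2 * m + 1/2 * β := by ring
    rw [heq]
    apply this.congr'
    filter_upwards [eventually_gt_atTop 1] with S hS1
    have hlog : Real.log S ≠ 0 := (Real.log_pos hS1).ne'
    field_simp
    ring
  refine ⟨fun h => ?_, fun h => ?_⟩
  · rw [hm, hβ, max_eq_left h.le, max_eq_left (by linarith)]; ring
  · rw [hm, hβ, max_eq_right h.le, max_eq_right (by linarith)]; ring
end
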